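/- Let q and q′ be Lorentzian quadratic forms on a real vector space V of dimension n+1 (n ≥ 1) with q ⪯ q′. Then for every v ∈ V: (i) q(v) = 0 implies q′(v) ≤ 0; (ii) q′(v) > 0 implies q(v) > 0; (iii) q′(v) = 0 implies q(v) ≥ 0. (Lemma 2.8, part (1).) -/

import Mathlib

/-- The standard Minkowski quadratic form of signature `(-,+,…,+)` on `ℝ^(n+1)`. -/
def mink (n : ℕ) (x : Fin (n + 1) → ℝ) : ℝ :=
  ∑ i, (if i = 0 then (-1 : ℝ) else 1) * x i ^ 2

/-- A function `f : V → ℝ` is Lorentzian if it is equivalent (isometric) to the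
standard Minkowski quadratic form on `ℝ^(n+1)`. -/
def IsLorentzian {V : Type*} [AddCommGroup V] [Module ℝ V] (n : ℕ) (f : V → ℝ) : Prop :=
  ∃ e : (Fin (n + 1) → ℝ) ≃ₗ[ℝ] V, ∀ x, f (e x) = mink n x

lemma mink_continuous (n : ℕ) : Continuous (mink n) := by
  unfold mink
  exact continuous_finset_sum _ (fun i _ => continuous_const.mul ((continuous_apply i).pow 2))

lemma mink_update (n : ℕ) (x : Fin (n + 1) → ℝ) (t : ℝ) :
    mink n (x + t • (Pi.single 0 (x 0) : Fin (n+1) → ℝ)) = mink n x - (2 * t + t ^ 2) * x 0 ^ 2 := by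
  unfold mink
  have h : ∀ i : Fin (n+1), (if i = 0 then (-1:ℝ) else 1) *
        ((x + t • (Pi.single 0 (x 0) : Fin (n+1) → ℝ)) i) ^ 2
      = (if i = 0 then (-1:ℝ) else 1) * x i ^ 2
        - (if i = 0 then (2 * t + t ^ 2) * x 0 ^ 2 else 0) := by
    intro i
    by_cases hi : i = 0
    · subst hi
      simp [Pi.single_apply]
      ring
    · simp [Pi.single_apply, hi]
  rw [Finset.sum_congr rfl (fun i _ => h i), Finset.sum_sub_distrib]
  simp

lemma mink_zero_x0 {n : ℕ} {x : Fin (n + 1) → ℝ} (hx : mink n x = 0) (h0 : x 0 = 0) :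
    x = 0 := by
  unfold mink at hx
  have : ∑ i : Fin (n+1), x i ^ 2 = 0 := by
    rw [← hx]
    apply Finset.sum_congr rfl
    intro i _
    by_cases hi : i = 0
    · simp [hi, h0]
    · simp [hi]
  funext i
  have := (Finset.sum_eq_zero_iff_of_nonneg (fun i _ => sq_nonneg (x i))).mp this i
    (Finset.mem_univ i)
  simpa using pow_eq_zero_iff (n := 2) (by norm_num) |>.mp (this)

theorem cone_inclusion_null_spacelike_relations {n : ℕ} (hn : 1 ≤ n)
    {V : Type*} [AddCommGroup V] [Module ℝ V]
    (q q' : QuadraticForm ℝ V)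
    (hq : IsLorentzian n ⇑q) (hq' : IsLorentzian n ⇑q')
    (hle : {v : V | q v < 0} ⊆ {v : V | q' v < 0}) :
    ∀ v : V,
      (q v = 0 → q' v ≤ 0) ∧ (0 < q' v → 0 < q v) ∧ (q' v = 0 → 0 ≤ q v) := by
  obtain ⟨e, he⟩ := hq
  obtain ⟨e', he'⟩ := hq'
  -- the pullback of q' to ℝ^(n+1) via e, which is continuous
  set g : (Fin (n + 1) → ℝ) → ℝ := fun x => q' (e x) with hg
  have hgcont : Continuous g := by
    have h1 : ∀ x, g x = mink n ((e.trans e'.symm) x) := by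
      intro x
      have := he' ((e.trans e'.symm) x)
      simpa [g] using this
    have h2 : Continuous ⇑(e.trans e'.symm) :=
      LinearMap.continuous_of_finiteDimensional (e.trans e'.symm).toLinearMap
    simpa [funext h1, Function.comp_def, LinearEquiv.trans_apply] using (mink_continuous n).comp h2
  -- key claim: mink x = 0 → g x ≤ 0
  have key : ∀ x : Fin (n + 1) → ℝ, mink n x = 0 → g x ≤ 0 := by
    intro x hx
    by_cases hx0 : x 0 = 0
    · have : x = 0 := mink_zero_x0 hx hx0
      subst this
      simp [g]
    · -- approach x from inside the cone
      set c : ℝ → (Fin (n + 1) → ℝ) := fun t => x + t • (Pi.single 0 (x 0) : Fin (n+1) → ℝ) with hc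
      have hneg : ∀ t > (0:ℝ), g (c t) < 0 := by
        intro t ht
        have hm : mink n (c t) < 0 := by
          rw [mink_update, hx]
          have : 0 < (2 * t + t ^ 2) * x 0 ^ 2 := by
            apply mul_pos
            · nlinarith
            · positivity
          linarith
        have hq : q (e (c t)) < 0 := by rw [he]; exact hm
        exact hle hq
      have hcont : Filter.Tendsto (fun t => g (c t)) (nhdsWithin 0 (Set.Ioi 0))
          (nhds (g x)) := by
        have hc0 : Filter.Tendsto c (nhdsWithin 0 (Set.Ioi 0)) (nhds x) := by
          have : Continuous c := by
            apply continuous_const.add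
            exact continuous_id.smul continuous_const
          have := (this.tendsto 0).mono_left (nhdsWithin_le_nhds (s := Set.Ioi (0:ℝ)))
          simpa [c] using this
        exact (hgcont.tendsto x).comp hc0
      refine le_of_tendsto hcont ?_
      filter_upwards [self_mem_nhdsWithin] with t ht
      exact le_of_lt (hneg t ht)
  intro v
  set x := e.symm v with hxv
  have hvx : v = e x := by simp [hxv]
  have hqv : q v = mink n x := by rw [hvx, he]
  have hq'v : q' v = g x := by rw [hvx]
  have part1 : q v = 0 → q' v ≤ 0 := by
    intro h
    rw [hq'v]
    exact key x (by rw [← hqv]; exact h)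
  refine ⟨part1, ?_, ?_⟩
  · intro h
    by_contra hcon
    push_neg at hcon
    rcases lt_or_eq_of_le hcon with h1 | h1
    · have := hle h1
      simp only [Set.mem_setOf_eq] at this
      linarith
    · have := part1 h1
      linarith
  · intro h
    by_contra hcon
    push_neg at hcon
    have := hle hcon
    simp only [Set.mem_setOf_eq] at this
    linarith
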